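/- Let k ≥ 2 be an integer, F a field, S_1,…,S_k finite nonempty subsets of ℤ, and c : S_1 × ⋯ × S_k → F a coefficient array whose slice rank is at least 2 (i.e., c is neither zero nor a slice). Then there exist a change of bases given by invertible matrices N_1,…,N_k and linear orders σ_1,…,σ_k on ℤ (with product partial order σ) such that, denoting by Γ′ the support of the transformed coefficient array c′, one has H(Γ′_σ) ≠ 0. -/

import Mathlib

open scoped BigOperators
open Classical

noncomputable section

namespace SlicePaper

/-- Shannon entropy of the `i`-th coordinate marginal of a distribution `p` on `Δ`. -/
def margEnt {ι : Type*} [Fintype ι] (Δ : Finset (ι → ℤ)) (p : (ι → ℤ) → ℝ) (i : ι) : ℝ :=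
  -∑ α ∈ Δ.image (fun γ => γ i),
      (∑ γ ∈ Δ.filter (fun γ => γ i = α), p γ) *
        Real.log (∑ γ ∈ Δ.filter (fun γ => γ i = α), p γ)

/-- The entropy `H(Δ)` of a finite set of integer tuples. -/
def HSet {ι : Type*} [Fintype ι] (Δ : Finset (ι → ℤ)) : ℝ :=
  sSup {e : ℝ | ∃ p : (ι → ℤ) → ℝ, (∀ γ, 0 ≤ p γ) ∧ (∀ γ, p γ ≠ 0 → γ ∈ Δ) ∧
    (∑ γ ∈ Δ, p γ) = 1 ∧ e = ⨅ i, margEnt Δ p i}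

/-- Maximal elements of `Δ` w.r.t. the product of the linear orders `σ i`. -/
def maxElems {ι : Type*} [Fintype ι] (σ : ι → LinearOrder ℤ) (Δ : Finset (ι → ℤ)) :
    Finset (ι → ℤ) :=
  Δ.filter (fun γ => ∀ δ ∈ Δ, (∀ i, (σ i).le (γ i) (δ i)) → γ = δ)

/-- `ξ k = log (k / (k-1)^((k-1)/k))`. -/
def xi (k : ℕ) : ℝ :=
  Real.log ((k : ℝ) / ((k : ℝ) - 1) ^ (((k : ℝ) - 1) / (k : ℝ)))

/-- Slice rank of a coefficient array `c`. -/
def sliceRank {k : ℕ} (F : Type*) [Field F] (τ : Fin k → Type*) [∀ i, Fintype (τ i)]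
    (c : (∀ i, τ i) → F) : ℕ :=
  sInf {r : ℕ | ∃ j : Fin r → Fin k, ∃ a : ∀ l : Fin r, τ (j l) → F,
    ∃ b : ∀ l : Fin r, (((i : {i : Fin k // i ≠ j l}) → τ i.1) → F),
    ∀ s : ∀ i, τ i, c s = ∑ l : Fin r, a l (s (j l)) * b l (fun i => s i.1)}

/-- `n`-th tensor power of a coefficient array. -/
def tpow {k : ℕ} {F : Type*} [Field F] {τ : Fin k → Type*} (c : (∀ i, τ i) → F) (n : ℕ) :
    (∀ i, Fin n → τ i) → F :=
  fun u => ∏ m : Fin n, c (fun i => u i m)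

/-- Support of a coefficient array, as a finite set of integer tuples. -/
def support {k : ℕ} {F : Type*} [Field F] (S : Fin k → Finset ℤ)
    (c : (∀ i, {x : ℤ // x ∈ S i}) → F) : Finset (Fin k → ℤ) :=
  (Finset.univ.filter (fun s : ∀ i, {x : ℤ // x ∈ S i} => c s ≠ 0)).image
    (fun s i => (s i : ℤ))

/-- Section `Γ_I^x`: restrictions to coordinates outside `I` of the γ ∈ Γ agreeing with x on I. -/
def sect {k : ℕ} (Γ : Finset (Fin k → ℤ)) (I : Finset (Fin k)) (x : Fin k → ℤ) :
    Finset ({i : Fin k // i ∉ I} → ℤ) :=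
  (Γ.filter (fun γ => ∀ i ∈ I, γ i = x i)).image (fun γ i => γ i.1)

/-- Section along a single coordinate. -/
def sect1 {k : ℕ} (Γ : Finset (Fin k → ℤ)) (i : Fin k) (a : ℤ) :
    Finset ({j : Fin k // j ≠ i} → ℤ) :=
  (Γ.filter (fun γ => γ i = a)).image (fun γ j => γ j.1)

/-- Trifferent set of strings. -/
def trifferent {n : ℕ} {α : Type*} (A : Finset (Fin n → α)) : Prop :=
  ∀ x ∈ A, ∀ y ∈ A, ∀ z ∈ A, x ≠ y → y ≠ z → x ≠ z →
    ∃ i, x i ≠ y i ∧ y i ≠ z i ∧ x i ≠ z i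

/-- The cube root of unity `ω = e^{2πi/3}`. -/
def w : ℂ := Complex.exp (2 * Real.pi * Complex.I / 3)

/-- The tensor `f_{x,y}(z,t)` used for the trifference problem. -/
def f {n : ℕ} (x y z t : Fin n → ℂ) : ℂ :=
  ∏ i, (x i + y i + z i) * (x i + y i + t i)

/-- Monomial functions `g_{α,β}`. -/
def g {n : ℕ} (α β : Fin n → ℕ) : (Fin n → ℂ) × (Fin n → ℂ) → ℂ :=
  fun q => ∏ i, (q.1 i + q.2 i) ^ α i * (q.1 i * q.2 i) ^ β i



set_option linter.unusedSectionVars false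

section aux

/-- `-q * log q ≤ 1` for `0 ≤ q`. -/
lemma neg_mul_log_le_one {q : ℝ} (h0 : 0 ≤ q) : -(q * Real.log q) ≤ 1 := by
  rcases eq_or_lt_of_le h0 with h | h
  · simp [← h]
  · have hlog : Real.log q⁻¹ ≤ q⁻¹ - 1 := Real.log_le_sub_one_of_pos (by positivity)
    have : -(q * Real.log q) = q * Real.log q⁻¹ := by
      rw [Real.log_inv]; ring
    rw [this]
    calc q * Real.log q⁻¹ ≤ q * (q⁻¹ - 1) := by
          exact mul_le_mul_of_nonneg_left hlog h0
      _ = 1 - q := by field_simp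
      _ ≤ 1 := by linarith

/-- `0 ≤ -q * log q` for `0 ≤ q ≤ 1`. -/
lemma neg_mul_log_nonneg {q : ℝ} (h0 : 0 ≤ q) (h1 : q ≤ 1) : 0 ≤ -(q * Real.log q) := by
  rcases eq_or_lt_of_le h0 with h | h
  · simp [← h]
  · have : Real.log q ≤ 0 := Real.log_nonpos (le_of_lt h) h1
    nlinarith

lemma neg_mul_log_pos {q : ℝ} (h0 : 0 < q) (h1 : q < 1) : 0 < -(q * Real.log q) := by
  have : Real.log q < 0 := Real.log_neg h0 h1
  nlinarith

section marg
variable {ι : Type*} [Fintype ι] (Δ : Finset (ι → ℤ)) (p : (ι → ℤ) → ℝ)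

lemma margEnt_le_card (hp : ∀ γ, 0 ≤ p γ) (hsum : (∑ γ ∈ Δ, p γ) = 1) (i : ι) :
    margEnt Δ p i ≤ (Δ.card : ℝ) := by
  have hb : ∀ α ∈ Δ.image (fun γ => γ i),
      -((∑ γ ∈ Δ.filter (fun γ => γ i = α), p γ) *
        Real.log (∑ γ ∈ Δ.filter (fun γ => γ i = α), p γ)) ≤ 1 := by
    intro α _
    exact neg_mul_log_le_one (Finset.sum_nonneg fun γ _ => hp γ)
  have : margEnt Δ p i = ∑ α ∈ Δ.image (fun γ => γ i),
      -((∑ γ ∈ Δ.filter (fun γ => γ i = α), p γ) *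
        Real.log (∑ γ ∈ Δ.filter (fun γ => γ i = α), p γ)) := by
    rw [margEnt, ← Finset.sum_neg_distrib]
  rw [this]
  calc (∑ α ∈ Δ.image (fun γ => γ i),
      -((∑ γ ∈ Δ.filter (fun γ => γ i = α), p γ) *
        Real.log (∑ γ ∈ Δ.filter (fun γ => γ i = α), p γ)))
      ≤ ∑ _α ∈ Δ.image (fun γ => γ i), (1:ℝ) := Finset.sum_le_sum hb
    _ = ((Δ.image (fun γ => γ i)).card : ℝ) := by simp
    _ ≤ (Δ.card : ℝ) := by exact_mod_cast Finset.card_image_le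

end marg


section hset
variable {k : ℕ}

/-- Positivity of a marginal entropy, given two points of `Δ` with distinct `i`-th
coordinates and positive mass. -/
lemma margEnt_pos (Δ : Finset (Fin k → ℤ)) (p : (Fin k → ℤ) → ℝ) (i : Fin k)
    (hp0 : ∀ x, 0 ≤ p x) (hpsum : (∑ x ∈ Δ, p x) = 1)
    (g w : Fin k → ℤ) (hg : g ∈ Δ) (hw : w ∈ Δ) (hne : w i ≠ g i)
    (hpg : 0 < p g) (hpw : 0 < p w) :
    0 < margEnt Δ p i := by
  have hq0 : ∀ α, 0 ≤ ∑ x ∈ Δ.filter (fun x => x i = α), p x :=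
    fun α => Finset.sum_nonneg fun x _ => hp0 x
  have hq1 : ∀ α, (∑ x ∈ Δ.filter (fun x => x i = α), p x) ≤ 1 := by
    intro α
    rw [← hpsum]
    exact Finset.sum_le_sum_of_subset_of_nonneg (Finset.filter_subset _ _) (fun x hx _ => hp0 x)
  have hmemg : g ∈ Δ.filter (fun x => x i = g i) := Finset.mem_filter.2 ⟨hg, rfl⟩
  have hmemw : w ∈ Δ.filter (fun x => x i = w i) := Finset.mem_filter.2 ⟨hw, rfl⟩
  have hqgpos : 0 < ∑ x ∈ Δ.filter (fun x => x i = g i), p x :=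
    lt_of_lt_of_le hpg (Finset.single_le_sum (fun x _ => hp0 x) hmemg)
  have hqwpos : 0 < ∑ x ∈ Δ.filter (fun x => x i = w i), p x :=
    lt_of_lt_of_le hpw (Finset.single_le_sum (fun x _ => hp0 x) hmemw)
  have hdisj : Disjoint (Δ.filter (fun x => x i = g i)) (Δ.filter (fun x => x i = w i)) := by
    rw [Finset.disjoint_left]
    intro x hx1 hx2
    have e1 : x i = g i := (Finset.mem_filter.1 hx1).2
    have e2 : x i = w i := (Finset.mem_filter.1 hx2).2
    exact hne (e2 ▸ e1)
  have hsumle : (∑ x ∈ Δ.filter (fun x => x i = g i), p x)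
      + (∑ x ∈ Δ.filter (fun x => x i = w i), p x) ≤ 1 := by
    rw [← Finset.sum_union hdisj, ← hpsum]
    exact Finset.sum_le_sum_of_subset_of_nonneg
      (Finset.union_subset (Finset.filter_subset _ _) (Finset.filter_subset _ _))
      (fun x hx _ => hp0 x)
  have hqglt : (∑ x ∈ Δ.filter (fun x => x i = g i), p x) < 1 := by linarith
  have hrw : margEnt Δ p i = ∑ α ∈ Δ.image (fun x => x i),
      -((∑ x ∈ Δ.filter (fun x => x i = α), p x) *
        Real.log (∑ x ∈ Δ.filter (fun x => x i = α), p x)) := by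
    rw [margEnt, ← Finset.sum_neg_distrib]
  rw [hrw]
  have hmemim : g i ∈ Δ.image (fun x => x i) := Finset.mem_image_of_mem _ hg
  calc (0:ℝ) < -((∑ x ∈ Δ.filter (fun x => x i = g i), p x) *
        Real.log (∑ x ∈ Δ.filter (fun x => x i = g i), p x)) :=
        neg_mul_log_pos hqgpos hqglt
    _ ≤ _ := Finset.single_le_sum
        (fun α _ => neg_mul_log_nonneg (hq0 α) (hq1 α)) hmemim

/-- The main entropy lemma: if `Δ` contains a point `γ` and, for every coordinate `i`,
a point `v i` differing from `γ` at `i`, then `HSet Δ ≠ 0`. -/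
lemma HSet_ne_zero (hk : 2 ≤ k) (Δ : Finset (Fin k → ℤ)) (γ : Fin k → ℤ)
    (hγ : γ ∈ Δ) (v : Fin k → (Fin k → ℤ)) (hv : ∀ i, v i ∈ Δ) (hvne : ∀ i, v i i ≠ γ i) :
    HSet Δ ≠ 0 := by
  have hkpos : 0 < k := lt_of_lt_of_le (by norm_num) hk
  have hkR : (0:ℝ) < (k:ℝ) := by exact_mod_cast hkpos
  haveI : Nonempty (Fin k) := ⟨⟨0, hkpos⟩⟩
  have hhalf : (0:ℝ) < 1/(2*(k:ℝ)) := by positivity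
  set p : (Fin k → ℤ) → ℝ := fun x =>
    (1/2) * (if x = γ then 1 else 0)
      + (1/(2*(k:ℝ))) * ∑ i : Fin k, (if x = v i then 1 else 0) with hp_def
  have hp_apply : ∀ x, p x = (1/2) * (if x = γ then 1 else 0)
      + (1/(2*(k:ℝ))) * ∑ i : Fin k, (if x = v i then 1 else 0) := fun x => rfl
  have hp0 : ∀ x, 0 ≤ p x := by
    intro x
    rw [hp_apply]
    have h1 : (0:ℝ) ≤ (if x = γ then 1 else 0) := by split <;> norm_num
    have h2 : (0:ℝ) ≤ ∑ i : Fin k, (if x = v i then (1:ℝ) else 0) :=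
      Finset.sum_nonneg (fun i _ => by split <;> norm_num)
    have := mul_nonneg hhalf.le h2
    nlinarith
  have hpsupp : ∀ x, p x ≠ 0 → x ∈ Δ := by
    intro x hx
    by_contra hxΔ
    apply hx
    have h1 : x ≠ γ := fun h => hxΔ (h ▸ hγ)
    have h2 : ∀ i, x ≠ v i := fun i h => hxΔ (h ▸ hv i)
    rw [hp_apply, if_neg h1]
    have : ∀ i : Fin k, (if x = v i then (1:ℝ) else 0) = 0 := fun i => if_neg (h2 i)
    rw [Finset.sum_congr rfl (fun i _ => this i)]
    simp
  have hpsum : (∑ x ∈ Δ, p x) = 1 := by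
    have e0 : (∑ x ∈ Δ, p x) = (∑ x ∈ Δ, (1/2) * (if x = γ then (1:ℝ) else 0))
        + ∑ x ∈ Δ, (1/(2*(k:ℝ))) * ∑ i : Fin k, (if x = v i then 1 else 0) := by
      rw [← Finset.sum_add_distrib]
    rw [e0]
    have e1 : (∑ x ∈ Δ, (1/2 : ℝ) * (if x = γ then 1 else 0)) = 1/2 := by
      rw [← Finset.mul_sum, Finset.sum_ite_eq' Δ γ (fun _ => (1:ℝ)), if_pos hγ]
      norm_num
    have e2 : (∑ x ∈ Δ, (1/(2*(k:ℝ))) * ∑ i : Fin k, (if x = v i then (1:ℝ) else 0)) = 1/2 := by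
      rw [← Finset.mul_sum, Finset.sum_comm]
      have : ∀ i : Fin k, (∑ x ∈ Δ, if x = v i then (1:ℝ) else 0) = 1 := by
        intro i
        rw [Finset.sum_ite_eq' Δ (v i) (fun _ => (1:ℝ)), if_pos (hv i)]
      rw [Finset.sum_congr rfl (fun i _ => this i)]
      rw [Finset.sum_const, Finset.card_univ, Fintype.card_fin]
      field_simp
      ring
    rw [e1, e2]; norm_num
  have hpγ : 0 < p γ := by
    rw [hp_apply, if_pos rfl]
    have h2 : (0:ℝ) ≤ ∑ i : Fin k, (if γ = v i then (1:ℝ) else 0) :=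
      Finset.sum_nonneg (fun i _ => by split <;> norm_num)
    nlinarith
  have hpv : ∀ i, 0 < p (v i) := by
    intro i
    rw [hp_apply]
    have h1 : (0:ℝ) ≤ (1/2) * (if v i = γ then 1 else 0) := by
      have : (0:ℝ) ≤ (if v i = γ then (1:ℝ) else 0) := by split <;> norm_num
      linarith
    have h2 : (1:ℝ) ≤ ∑ j : Fin k, (if v i = v j then (1:ℝ) else 0) := by
      have hs := Finset.single_le_sum (f := fun j : Fin k => if v i = v j then (1:ℝ) else 0)
        (fun j _ => by split <;> norm_num) (Finset.mem_univ i)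
      simpa using hs
    have h3 := mul_le_mul_of_nonneg_left h2 hhalf.le
    nlinarith
  have hmarg : ∀ i, 0 < margEnt Δ p i := by
    intro i
    exact margEnt_pos Δ p i hp0 hpsum γ (v i) hγ (hv i) (hvne i) hpγ (hpv i)
  obtain ⟨i₀, _, hi₀⟩ := Finset.exists_min_image Finset.univ (margEnt Δ p)
    ⟨⟨0, hkpos⟩, Finset.mem_univ _⟩
  have hinf_pos : 0 < ⨅ i, margEnt Δ p i :=
    lt_of_lt_of_le (hmarg i₀) (le_ciInf (fun x => hi₀ x (Finset.mem_univ x)))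
  have hmem : (⨅ i, margEnt Δ p i) ∈ {e : ℝ | ∃ p : (Fin k → ℤ) → ℝ, (∀ γ, 0 ≤ p γ) ∧
      (∀ γ, p γ ≠ 0 → γ ∈ Δ) ∧ (∑ γ ∈ Δ, p γ) = 1 ∧ e = ⨅ i, margEnt Δ p i} :=
    ⟨p, hp0, hpsupp, hpsum, rfl⟩
  have hbdd : BddAbove {e : ℝ | ∃ p : (Fin k → ℤ) → ℝ, (∀ γ, 0 ≤ p γ) ∧
      (∀ γ, p γ ≠ 0 → γ ∈ Δ) ∧ (∑ γ ∈ Δ, p γ) = 1 ∧ e = ⨅ i, margEnt Δ p i} := by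
    refine ⟨(Δ.card : ℝ), ?_⟩
    rintro e ⟨p', hp'0, _, hp'sum, rfl⟩
    have hbb : BddBelow (Set.range fun i => margEnt Δ p' i) :=
      (Set.finite_range _).bddBelow
    calc (⨅ i, margEnt Δ p' i) ≤ margEnt Δ p' i₀ := ciInf_le hbb i₀
      _ ≤ (Δ.card : ℝ) := margEnt_le_card Δ p' hp'0 hp'sum i₀
  have hle : (⨅ i, margEnt Δ p i) ≤ HSet Δ := le_csSup hbdd hmem
  have : 0 < HSet Δ := lt_of_lt_of_le hinf_pos hle
  exact ne_of_gt this

end hset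

/-! ### Custom linear orders on ℤ with a prescribed top or bottom element -/

/-- An injection `ℤ → ℤ` with range in `[1, ∞)`. -/
def posEmb (x : ℤ) : ℤ := if 0 ≤ x then 2*x+1 else -2*x

lemma posEmb_pos (x : ℤ) : 1 ≤ posEmb x := by
  unfold posEmb; split <;> omega

lemma posEmb_inj : Function.Injective posEmb := by
  intro x y h
  unfold posEmb at h
  split at h <;> split at h <;> omega

/-- Linear order on `ℤ` in which `a` is the (strict) top element. -/
def topOrder (a : ℤ) : LinearOrder ℤ :=
  LinearOrder.lift' (fun x => if x = a then (1:ℤ) else -posEmb x) (by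
    intro x y h
    dsimp only at h
    split at h <;> split at h
    · omega
    · exfalso; have := posEmb_pos y; omega
    · exfalso; have := posEmb_pos x; omega
    · have : posEmb x = posEmb y := by omega
      exact posEmb_inj this)

/-- Linear order on `ℤ` in which `a` is the (strict) bottom element. -/
def botOrder (a : ℤ) : LinearOrder ℤ :=
  LinearOrder.lift' (fun x => if x = a then (-1:ℤ) else posEmb x) (by
    intro x y h
    dsimp only at h
    split at h <;> split at h
    · omega
    · exfalso; have := posEmb_pos y; omega
    · exfalso; have := posEmb_pos x; omega
    · exact posEmb_inj h)

lemma topOrder_le_top (a x : ℤ) : (topOrder a).le x a := by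
  show (if x = a then (1:ℤ) else -posEmb x) ≤ (if a = a then (1:ℤ) else -posEmb a)
  rw [if_pos rfl]
  split
  · omega
  · have := posEmb_pos x; omega

lemma topOrder_top_le {a x : ℤ} (h : (topOrder a).le a x) : x = a := by
  by_contra hne
  have h' : (if a = a then (1:ℤ) else -posEmb a) ≤ (if x = a then (1:ℤ) else -posEmb x) := h
  rw [if_pos rfl, if_neg hne] at h'
  have := posEmb_pos x; omega

lemma botOrder_bot_le (a x : ℤ) : (botOrder a).le a x := by
  show (if a = a then (-1:ℤ) else posEmb a) ≤ (if x = a then (-1:ℤ) else posEmb x)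
  rw [if_pos rfl]
  split
  · omega
  · have := posEmb_pos x; omega

lemma botOrder_le_bot {a x : ℤ} (h : (botOrder a).le x a) : x = a := by
  by_contra hne
  have h' : (if x = a then (-1:ℤ) else posEmb x) ≤ (if a = a then (-1:ℤ) else posEmb a) := h
  rw [if_pos rfl, if_neg hne] at h'
  have := posEmb_pos x; omega

lemma mem_maxElems {ι : Type*} [Fintype ι] {σ : ι → LinearOrder ℤ} {Δ : Finset (ι → ℤ)}
    {v : ι → ℤ} :
    v ∈ maxElems σ Δ ↔ v ∈ Δ ∧ ∀ δ ∈ Δ, (∀ i, (σ i).le (v i) (δ i)) → v = δ := by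
  unfold maxElems
  simp [Finset.mem_filter]

/-! ### Climbing to a maximal element -/

section climb
variable {k : ℕ} (σ : Fin k → LinearOrder ℤ)

/-- The product (partial) order induced by the linear orders `σ i`. -/
def Rle (u v : Fin k → ℤ) : Prop := ∀ i, (σ i).le (u i) (v i)

lemma Rle_refl (u : Fin k → ℤ) : Rle σ u u :=
  fun i => @le_refl ℤ (σ i).toPreorder (u i)

lemma Rle_trans {u v w : Fin k → ℤ} (h1 : Rle σ u v) (h2 : Rle σ v w) : Rle σ u w :=
  fun i => @le_trans ℤ (σ i).toPreorder _ _ _ (h1 i) (h2 i)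

lemma Rle_antisymm {u v : Fin k → ℤ} (h1 : Rle σ u v) (h2 : Rle σ v u) : u = v :=
  funext fun i => @le_antisymm ℤ (σ i).toPartialOrder _ _ (h1 i) (h2 i)

lemma exists_maximal_above (Δ : Finset (Fin k → ℤ)) :
    ∀ (n : ℕ) (u : Fin k → ℤ), u ∈ Δ → (Δ.filter (fun w => Rle σ u w)).card ≤ n →
      ∃ v ∈ maxElems σ Δ, Rle σ u v := by
  intro n
  induction n with
  | zero =>
    intro u hu hcard
    exfalso
    have : u ∈ Δ.filter (fun w => Rle σ u w) := Finset.mem_filter.2 ⟨hu, Rle_refl σ u⟩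
    have := Finset.card_pos.2 ⟨u, this⟩
    omega
  | succ n ih =>
    intro u hu hcard
    by_cases hmax : ∀ δ ∈ Δ, (∀ i, (σ i).le (u i) (δ i)) → u = δ
    · exact ⟨u, mem_maxElems.2 ⟨hu, hmax⟩, Rle_refl σ u⟩
    · push_neg at hmax
      obtain ⟨w, hwΔ, hle, hne⟩ := hmax
      have hsub : Δ.filter (fun z => Rle σ w z) ⊆ Δ.filter (fun z => Rle σ u z) := by
        intro z hz
        rw [Finset.mem_filter] at hz ⊢
        exact ⟨hz.1, Rle_trans σ hle hz.2⟩
      have hnotmem : u ∉ Δ.filter (fun z => Rle σ w z) := by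
        intro hmem
        exact hne (Rle_antisymm σ hle (Finset.mem_filter.1 hmem).2)
      have hss : Δ.filter (fun z => Rle σ w z) ⊂ Δ.filter (fun z => Rle σ u z) := by
        refine ⟨hsub, fun hsub' => hnotmem (hsub' (Finset.mem_filter.2 ⟨hu, Rle_refl σ u⟩))⟩
      have hcard' : (Δ.filter (fun z => Rle σ w z)).card ≤ n := by
        have := Finset.card_lt_card hss
        omega
      obtain ⟨v, hv, hwv⟩ := ih w hwΔ hcard'
      exact ⟨v, hv, Rle_trans σ hle hwv⟩

end climb

/-- `G` is a hitting set for the differences with `γ` of the elements of `Δ`. -/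
def HitsSet {k : ℕ} (Δ : Finset (Fin k → ℤ)) (γ : Fin k → ℤ) (G : Finset (Fin k)) : Prop :=
  ∀ u ∈ Δ, u ≠ γ → ∃ i ∈ G, u i ≠ γ i

/-! ### The combinatorial heart: choosing the orders via a minimal hitting set -/

lemma exists_good_orders {k : ℕ} (Δ : Finset (Fin k → ℤ)) (γ : Fin k → ℤ) (hγ : γ ∈ Δ)
    (hK2 : ∀ u ∈ Δ, u ≠ γ → ∀ j, ¬(∀ i, i ≠ j → u i = γ i))
    (hK3 : ∀ i, ∃ u ∈ Δ, u i ≠ γ i) :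
    ∃ σ : Fin k → LinearOrder ℤ,
      γ ∈ maxElems σ Δ ∧ ∀ i, ∃ v ∈ maxElems σ Δ, v i ≠ γ i := by
  -- hitting sets
  have huniv : HitsSet Δ γ Finset.univ := by
    intro u hu hne
    by_contra hcon
    push_neg at hcon
    exact hne (funext fun i => hcon i (Finset.mem_univ i))
  obtain ⟨G, hGmem, hGmin⟩ := Finset.exists_min_image
    ((Finset.univ : Finset (Fin k)).powerset.filter (HitsSet Δ γ)) Finset.card
    ⟨Finset.univ, Finset.mem_filter.2 ⟨Finset.mem_powerset_self _, huniv⟩⟩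
  have hGhits : HitsSet Δ γ G := (Finset.mem_filter.1 hGmem).2
  have hGminimal : ∀ i ∈ G, ¬HitsSet Δ γ (G.erase i) := by
    intro i hi hhits
    have hmem' : G.erase i ∈ ((Finset.univ : Finset (Fin k)).powerset.filter (HitsSet Δ γ)) :=
      Finset.mem_filter.2 ⟨Finset.mem_powerset.2 (Finset.subset_univ _), hhits⟩
    have h1 := hGmin _ hmem'
    have h2 := Finset.card_erase_lt_of_mem hi
    omega
  -- the orders
  set σ : Fin k → LinearOrder ℤ :=
    fun i => if i ∈ G then topOrder (γ i) else botOrder (γ i) with hσ_def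
  have hσ_top : ∀ i ∈ G, σ i = topOrder (γ i) := fun i hi => by simp [hσ_def, hi]
  have hσ_bot : ∀ i ∉ G, σ i = botOrder (γ i) := fun i hi => by simp [hσ_def, hi]
  refine ⟨σ, ?_, ?_⟩
  · -- γ maximal
    refine mem_maxElems.2 ⟨hγ, ?_⟩
    intro δ hδ hle
    by_contra hne
    obtain ⟨i, hiG, hine⟩ := hGhits δ hδ (Ne.symm hne)
    have : (topOrder (γ i)).le (γ i) (δ i) := by rw [← hσ_top i hiG]; exact hle i
    exact hine (topOrder_top_le this)
  · intro i
    by_cases hiG : i ∈ G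
    · -- coordinate in G: use the minimality witness
      have := hGminimal i hiG
      unfold HitsSet at this
      push_neg at this
      obtain ⟨u, huΔ, hune, hagree⟩ := this
      -- hagree : ∀ j ∈ G.erase i, ¬ u j ≠ γ j  (push_neg form)
      have hagree' : ∀ j ∈ G, j ≠ i → u j = γ j := by
        intro j hj hji
        exact hagree j (Finset.mem_erase.2 ⟨hji, hj⟩)
      have hui : u i ≠ γ i := by
        obtain ⟨j, hjG, hjne⟩ := hGhits u huΔ hune
        by_cases hji : j = i
        · exact hji ▸ hjne
        · exact absurd (hagree' j hjG hji) hjne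
      obtain ⟨v, hv, huv⟩ := exists_maximal_above σ Δ Δ.card u huΔ
        (Finset.card_le_card (Finset.filter_subset _ _))
      refine ⟨v, hv, ?_⟩
      intro hvi
      -- suppose v i = γ i; derive a contradiction
      have hvG : ∀ j ∈ G, v j = γ j := by
        intro j hj
        by_cases hji : j = i
        · exact hji ▸ hvi
        · have h1 : (σ j).le (u j) (v j) := huv j
          rw [hσ_top j hj] at h1
          rw [hagree' j hj hji] at h1
          exact topOrder_top_le h1
      have hvγ : v = γ := by
        by_contra hvne
        obtain ⟨j, hjG, hjne⟩ := hGhits v (mem_maxElems.1 hv).1 hvne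
        exact hjne (hvG j hjG)
      -- u differs from γ in a second coordinate j* ≠ i
      have := hK2 u huΔ hune i
      push_neg at this
      obtain ⟨j', hji', hjne'⟩ := this
      have hjG' : j' ∉ G := fun hj => hjne' (hagree' j' hj hji')
      have h2 : (σ j').le (u j') (v j') := huv j'
      rw [hσ_bot j' hjG', hvγ] at h2
      exact hjne' (botOrder_le_bot h2)
    · -- coordinate not in G
      obtain ⟨u, huΔ, hui⟩ := hK3 i
      obtain ⟨v, hv, huv⟩ := exists_maximal_above σ Δ Δ.card u huΔ
        (Finset.card_le_card (Finset.filter_subset _ _))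
      refine ⟨v, hv, ?_⟩
      intro hvi
      have h2 : (σ i).le (u i) (v i) := huv i
      rw [hσ_bot i hiG, hvi] at h2
      exact hui (botOrder_le_bot h2)


def IsSlice {k : ℕ} {F : Type*} [Field F] {τ : Fin k → Type*} [∀ i, Fintype (τ i)]
    (c : (∀ i, τ i) → F) : Prop :=
  ∃ (j : Fin k) (a : τ j → F) (b : (((i : {i : Fin k // i ≠ j}) → τ i.1) → F)),
    ∀ s : ∀ i, τ i, c s = a (s j) * b (fun i => s i.1)

section algebra
variable {k : ℕ} {F : Type*} [Field F] {τ : Fin k → Type*}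
  [∀ i, Fintype (τ i)] [∀ i, DecidableEq (τ i)]

/-- Simultaneous change of bases. -/
def tr (N : ∀ i, Matrix (τ i) (τ i) F) (c : (∀ i, τ i) → F) : (∀ i, τ i) → F :=
  fun s => ∑ t : ∀ i, τ i, (∏ i, N i (s i) (t i)) * c t

lemma tr_tr (M N : ∀ i, Matrix (τ i) (τ i) F) (c : (∀ i, τ i) → F) :
    tr M (tr N c) = tr (fun i => M i * N i) c := by
  funext s
  unfold tr
  have e1 : ∑ t : ∀ i, τ i, (∏ i, M i (s i) (t i)) * ∑ u : ∀ i, τ i,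
      (∏ i, N i (t i) (u i)) * c u
      = ∑ t : ∀ i, τ i, ∑ u : ∀ i, τ i,
        (∏ i, M i (s i) (t i)) * ((∏ i, N i (t i) (u i)) * c u) := by
    exact Finset.sum_congr rfl fun t _ => Finset.mul_sum _ _ _
  rw [e1, Finset.sum_comm]
  refine Finset.sum_congr rfl fun u _ => ?_
  have e2 : ∑ t : ∀ i, τ i, (∏ i, M i (s i) (t i)) * ((∏ i, N i (t i) (u i)) * c u)
      = (∑ t : ∀ i, τ i, ∏ i, (M i (s i) (t i) * N i (t i) (u i))) * c u := by
    rw [Finset.sum_mul]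
    refine Finset.sum_congr rfl fun t _ => ?_
    rw [Finset.prod_mul_distrib]
    ring
  rw [e2]
  congr 1
  have e3 : ∀ i : Fin k, (M i * N i) (s i) (u i) = ∑ y : τ i, M i (s i) y * N i y (u i) :=
    fun i => Matrix.mul_apply
  rw [Finset.prod_congr rfl fun i _ => e3 i]
  rw [Finset.prod_univ_sum (fun _ => Finset.univ) (fun i y => M i (s i) y * N i y (u i))]
  rw [Fintype.piFinset_univ]

lemma tr_one (c : (∀ i, τ i) → F) : tr (fun _ => (1 : Matrix _ _ F)) c = c := by
  funext s
  unfold tr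
  have e1 : ∀ t : ∀ i, τ i, (∏ i, (1 : Matrix (τ i) (τ i) F) (s i) (t i)) * c t
      = if t = s then c t else 0 := by
    intro t
    have : ∀ i : Fin k, (1 : Matrix (τ i) (τ i) F) (s i) (t i)
        = if s i = t i then 1 else 0 := fun i => Matrix.one_apply
    rw [Finset.prod_congr rfl fun i _ => this i, Finset.prod_boole]
    by_cases h : t = s
    · rw [if_pos h, if_pos (fun i _ => by rw [h]), one_mul]
    · rw [if_neg h, if_neg, zero_mul]
      intro hall
      exact h (funext fun i => (hall i (Finset.mem_univ i)).symm)
  rw [Finset.sum_congr rfl fun t _ => e1 t, Finset.sum_ite_eq' Finset.univ s c,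
    if_pos (Finset.mem_univ s)]


lemma prod_split (j : Fin k) (f : Fin k → F) :
    ∏ i, f i = f j * ∏ i : {i : Fin k // i ≠ j}, f i.1 := by
  rw [← Finset.mul_prod_erase Finset.univ f (Finset.mem_univ j)]
  congr 1
  exact Finset.prod_subtype (Finset.univ.erase j) (by simp) f

lemma isSlice_tr (M : ∀ i, Matrix (τ i) (τ i) F) {c : (∀ i, τ i) → F} (h : IsSlice c) :
    IsSlice (tr M c) := by
  obtain ⟨j, a, b, hdec⟩ := h
  refine ⟨j, fun x => ∑ y : τ j, M j x y * a y,
    fun r => ∑ m : (∀ i : {i : Fin k // i ≠ j}, τ i.1),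
      (∏ i : {i : Fin k // i ≠ j}, M i.1 (r i) (m i)) * b m, ?_⟩
  intro s
  show tr M c s = _ * _
  unfold tr
  rw [Finset.sum_mul_sum]
  refine (Fintype.sum_equiv (Equiv.piSplitAt j τ) _
    (fun p => M j (s j) p.1 * a p.1 *
      ((∏ i : {i : Fin k // i ≠ j}, M i.1 (s i.1) (p.2 i)) * b p.2)) ?_).trans ?_
  · intro t
    rw [Equiv.piSplitAt_apply]
    dsimp only
    rw [hdec t, prod_split j (fun i => M i (s i) (t i))]
    ring
  · rw [Fintype.sum_prod_type]

lemma isSlice_of_constant (c : (∀ i, τ i) → F) (i₀ : Fin k) (a₀ : τ i₀)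
    (h : ∀ s, c s ≠ 0 → s i₀ = a₀) : IsSlice c := by
  refine ⟨i₀, fun x => if x = a₀ then 1 else 0,
    fun r => c ((Equiv.piSplitAt i₀ τ).symm (a₀, r)), ?_⟩
  intro s
  beta_reduce
  by_cases hs : s i₀ = a₀
  · rw [if_pos hs, one_mul]
    congr 1
    have : ((a₀ : τ i₀), fun i : {i : Fin k // i ≠ i₀} => s i.1) = Equiv.piSplitAt i₀ τ s := by
      rw [Equiv.piSplitAt_apply, ← hs]
    rw [this, Equiv.symm_apply_apply]
  · rw [if_neg hs, zero_mul]
    by_contra hc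
    exact hs (h s hc)

end algebra

section rank
variable {k : ℕ} {F : Type*} [Field F] {τ : Fin k → Type*} [∀ i, Fintype (τ i)]
  {c : (∀ i, τ i) → F}

lemma exists_ne_zero_of_two_le_sliceRank (hc : 2 ≤ sliceRank F τ c) : ∃ γ, c γ ≠ 0 := by
  by_contra h
  push_neg at h
  have hmem : (0 : ℕ) ∈ {r : ℕ | ∃ j : Fin r → Fin k, ∃ a : ∀ l : Fin r, τ (j l) → F,
      ∃ b : ∀ l : Fin r, (((i : {i : Fin k // i ≠ j l}) → τ i.1) → F),
      ∀ s : ∀ i, τ i, c s = ∑ l : Fin r, a l (s (j l)) * b l (fun i => s i.1)} := by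
    refine ⟨Fin.elim0, fun l => l.elim0, fun l => l.elim0, fun s => ?_⟩
    rw [h s]
    simp
  have h2 : sliceRank F τ c ≤ 0 := Nat.sInf_le hmem
  omega

lemma not_isSlice_of_two_le_sliceRank (hc : 2 ≤ sliceRank F τ c) : ¬ IsSlice c := by
  rintro ⟨j₀, a, b, hdec⟩
  have hmem : (1 : ℕ) ∈ {r : ℕ | ∃ j : Fin r → Fin k, ∃ a : ∀ l : Fin r, τ (j l) → F,
      ∃ b : ∀ l : Fin r, (((i : {i : Fin k // i ≠ j l}) → τ i.1) → F),
      ∀ s : ∀ i, τ i, c s = ∑ l : Fin r, a l (s (j l)) * b l (fun i => s i.1)} := by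
    refine ⟨fun _ => j₀, fun _ => a, fun _ => b, fun s => ?_⟩
    rw [Fin.sum_univ_one]
    exact hdec s
  have h2 : sliceRank F τ c ≤ 1 := Nat.sInf_le hmem
  omega

end rank

end aux

namespace SlicePaper2
open SlicePaper

section elim
variable {k : ℕ} {F : Type*} [Field F] {τ : Fin k → Type*}
  [∀ i, Fintype (τ i)] [∀ i, DecidableEq (τ i)]

variable (γ : ∀ i, τ i) (c : (∀ i, τ i) → F)

/-- Elimination coefficients. -/
def lam (i : Fin k) (x : τ i) : F :=
  if x = γ i then 0 else c (Function.update γ i x) * (c γ)⁻¹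

/-- The nilpotent part of the elimination matrix. -/
def elimA (i : Fin k) : Matrix (τ i) (τ i) F :=
  fun x y => if y = γ i then lam γ c i x else 0

/-- The elimination matrix in coordinate `i`. -/
def elimN (i : Fin k) : Matrix (τ i) (τ i) F := 1 - elimA γ c i

lemma elimA_apply (i : Fin k) (x y : τ i) :
    elimA γ c i x y = if y = γ i then lam γ c i x else 0 := rfl

lemma elimA_mul_self (i : Fin k) : elimA γ c i * elimA γ c i = 0 := by
  ext x z
  rw [Matrix.mul_apply]
  rw [Finset.sum_eq_single (γ i)]
  · have h1 : elimA γ c i (γ i) z = 0 := by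
      rw [elimA_apply]
      have : lam γ c i (γ i) = 0 := if_pos rfl
      rw [this, ite_self]
    rw [h1, mul_zero, Matrix.zero_apply]
  · intro y _ hy
    rw [elimA_apply, if_neg hy, zero_mul]
  · intro h
    exact absurd (Finset.mem_univ _) h

lemma isUnit_elimN (i : Fin k) : IsUnit (elimN γ c i) := by
  have h1 : elimN γ c i * (1 + elimA γ c i) = 1 := by
    have : elimN γ c i * (1 + elimA γ c i)
        = 1 - elimA γ c i * elimA γ c i := by
      unfold elimN
      noncomm_ring
    rw [this, elimA_mul_self, sub_zero]
  have h2 : (1 + elimA γ c i) * elimN γ c i = 1 := by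
    have : (1 + elimA γ c i) * elimN γ c i
        = 1 - elimA γ c i * elimA γ c i := by
      unfold elimN
      noncomm_ring
    rw [this, elimA_mul_self, sub_zero]
  exact ⟨⟨elimN γ c i, 1 + elimA γ c i, h1, h2⟩, rfl⟩

lemma elimN_apply (i : Fin k) (x y : τ i) :
    elimN γ c i x y = (if x = y then 1 else 0) - (if y = γ i then lam γ c i x else 0) := by
  unfold elimN
  rw [Matrix.sub_apply, Matrix.one_apply, elimA_apply]

lemma elimN_pivot_row (i : Fin k) (y : τ i) :
    elimN γ c i (γ i) y = if γ i = y then 1 else 0 := by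
  rw [elimN_apply]
  have : lam γ c i (γ i) = 0 := if_pos rfl
  rw [this, ite_self, sub_zero]

/-- Value of the transformed tensor on the line through `γ` in direction `j`. -/
lemma tr_elim_line (j : Fin k) (x : τ j) :
    tr (elimN γ c) c (Function.update γ j x)
      = c (Function.update γ j x) - lam γ c j x * c γ := by
  unfold tr
  have e1 : ∀ t : ∀ i, τ i,
      (∏ i, elimN γ c i (Function.update γ j x i) (t i)) * c t
      = if (∀ i ∈ Finset.univ.erase j, γ i = t i) then elimN γ c j x (t j) * c t else 0 := by
    intro t
    have hsplit : (∏ i, elimN γ c i (Function.update γ j x i) (t i))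
        = elimN γ c j x (t j)
          * ∏ i ∈ Finset.univ.erase j, (if γ i = t i then (1:F) else 0) := by
      rw [← Finset.mul_prod_erase Finset.univ _ (Finset.mem_univ j)]
      congr 1
      · rw [Function.update_self]
      · refine Finset.prod_congr rfl fun i hi => ?_
        have hij : i ≠ j := (Finset.mem_erase.1 hi).1
        rw [Function.update_of_ne hij, elimN_pivot_row]
    rw [hsplit, Finset.prod_boole]
    by_cases hP : ∀ i ∈ Finset.univ.erase j, γ i = t i
    · rw [if_pos hP, if_pos hP, mul_one]
    · rw [if_neg hP, if_neg hP, mul_zero, zero_mul]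
  rw [Finset.sum_congr rfl fun t _ => e1 t]
  rw [Finset.sum_ite, Finset.sum_const_zero, add_zero]
  have e2 : ∑ t ∈ Finset.univ.filter (fun t : ∀ i, τ i => ∀ i ∈ Finset.univ.erase j, γ i = t i),
      elimN γ c j x (t j) * c t
      = ∑ y : τ j, elimN γ c j x y * c (Function.update γ j y) := by
    refine Finset.sum_nbij' (fun t => t j) (fun y => Function.update γ j y) ?_ ?_ ?_ ?_ ?_
    · intro t _; exact Finset.mem_univ _
    · intro y _
      refine Finset.mem_filter.2 ⟨Finset.mem_univ _, fun i hi => ?_⟩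
      rw [Function.update_of_ne (Finset.mem_erase.1 hi).1]
    · intro t ht
      funext i
      by_cases hij : i = j
      · subst hij; rw [Function.update_self]
      · rw [Function.update_of_ne hij]
        exact ((Finset.mem_filter.1 ht).2 i (Finset.mem_erase.2 ⟨hij, Finset.mem_univ _⟩))
    · intro y _
      rw [Function.update_self]
    · intro t ht
      have ht' : Function.update γ j (t j) = t := by
        funext i
        by_cases hij : i = j
        · subst hij; rw [Function.update_self]
        · rw [Function.update_of_ne hij]
          exact (Finset.mem_filter.1 ht).2 i (Finset.mem_erase.2 ⟨hij, Finset.mem_univ _⟩)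
      rw [ht']
  rw [e2]
  have e3 : ∀ y : τ j, elimN γ c j x y * c (Function.update γ j y)
      = (if x = y then (1:F) else 0) * c (Function.update γ j y)
        - (if y = γ j then lam γ c j x else 0) * c (Function.update γ j y) := by
    intro y
    rw [elimN_apply, sub_mul]
  rw [Finset.sum_congr rfl fun y _ => e3 y, Finset.sum_sub_distrib]
  congr 1
  · have : ∀ y : τ j, (if x = y then (1:F) else 0) * c (Function.update γ j y)
        = if x = y then c (Function.update γ j y) else 0 := by
      intro y
      split <;> simp
    rw [Finset.sum_congr rfl fun y _ => this y, Finset.sum_ite_eq Finset.univ x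
      (fun y => c (Function.update γ j y)), if_pos (Finset.mem_univ x)]
  · have : ∀ y : τ j, (if y = γ j then lam γ c j x else 0) * c (Function.update γ j y)
        = if y = γ j then lam γ c j x * c (Function.update γ j y) else 0 := by
      intro y
      split <;> simp
    rw [Finset.sum_congr rfl fun y _ => this y, Finset.sum_ite_eq' Finset.univ (γ j)
      (fun y => lam γ c j x * c (Function.update γ j y)), if_pos (Finset.mem_univ _),
      Function.update_eq_self]

variable {γ c} (hγ : c γ ≠ 0)

lemma tr_elim_at_pivot (hk : 0 < k) : tr (elimN γ c) c γ = c γ := by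
  have j : Fin k := ⟨0, hk⟩
  have h := tr_elim_line γ c j (γ j)
  rw [Function.update_eq_self] at h
  rw [h]
  have : lam γ c j (γ j) = 0 := if_pos rfl
  rw [this, zero_mul, sub_zero]

include hγ in
lemma tr_elim_at_line (j : Fin k) (x : τ j) (hx : x ≠ γ j) :
    tr (elimN γ c) c (Function.update γ j x) = 0 := by
  rw [tr_elim_line]
  unfold lam
  rw [if_neg hx]
  field_simp
  simp

end elim
end SlicePaper2

/-- if `c` has slice rank at least 2, then after a suitable change of bases
(invertible matrices `N i`) there are linear orders `σ` for which the support `Γ'` of the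
transformed array satisfies `H(Γ'_σ) ≠ 0`. -/
theorem stmt4 {k : ℕ} (hk : 2 ≤ k) (F : Type*) [Field F]
    (S : Fin k → Finset ℤ) (hS : ∀ i, (S i).Nonempty)
    (c : (∀ i, {x : ℤ // x ∈ S i}) → F)
    (hc : 2 ≤ sliceRank F (fun i => {x : ℤ // x ∈ S i}) c) :
    ∃ N : ∀ i : Fin k, Matrix {x : ℤ // x ∈ S i} {x : ℤ // x ∈ S i} F,
      (∀ i, IsUnit (N i)) ∧
      ∃ σ : Fin k → LinearOrder ℤ,
        HSet (maxElems σ (support S (fun s =>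
          ∑ t : ∀ i, {x : ℤ // x ∈ S i}, (∏ i, N i (s i) (t i)) * c t))) ≠ 0 := by
  classical
  have hk0 : 0 < k := by omega
  obtain ⟨γ, hγ⟩ := exists_ne_zero_of_two_le_sliceRank hc
  refine ⟨SlicePaper2.elimN γ c, fun i => SlicePaper2.isUnit_elimN γ c i, ?_⟩
  set c' : (∀ i, {x : ℤ // x ∈ S i}) → F :=
    fun s => ∑ t : ∀ i, {x : ℤ // x ∈ S i},
      (∏ i, SlicePaper2.elimN γ c i (s i) (t i)) * c t with hc'_def
  have hc'tr : c' = tr (SlicePaper2.elimN γ c) c := rfl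
  have hc'γ : c' γ ≠ 0 := by
    rw [hc'tr, SlicePaper2.tr_elim_at_pivot hk0]
    exact hγ
  have hline : ∀ (j : Fin k) (x : {x : ℤ // x ∈ S j}), x ≠ γ j →
      c' (Function.update γ j x) = 0 := by
    intro j x hx
    rw [hc'tr]
    exact SlicePaper2.tr_elim_at_line hγ j x hx
  have hnotslice : ¬ IsSlice c' := by
    intro hsl
    have hinv : (fun i => (SlicePaper2.elimN γ c i)⁻¹ * SlicePaper2.elimN γ c i)
        = (fun _ : Fin k => (1 : Matrix _ _ F)) := by
      funext i
      exact Matrix.nonsing_inv_mul _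
        ((Matrix.isUnit_iff_isUnit_det _).1 (SlicePaper2.isUnit_elimN γ c i))
    have htrinv : tr (fun i => (SlicePaper2.elimN γ c i)⁻¹) c' = c := by
      rw [hc'tr, tr_tr, hinv, tr_one]
    have hslc : IsSlice c := by
      rw [← htrinv]
      exact isSlice_tr _ hsl
    exact not_isSlice_of_two_le_sliceRank hc hslc
  set Δ := support S c' with hΔ_def
  set γ'' : Fin k → ℤ := fun i => ((γ i : ℤ)) with hγ''_def
  have hmemsupp : ∀ s : ∀ i, {x : ℤ // x ∈ S i},
      c' s ≠ 0 → (fun i => ((s i : ℤ))) ∈ Δ := by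
    intro s hs
    rw [hΔ_def]
    unfold support
    exact Finset.mem_image.2 ⟨s, Finset.mem_filter.2 ⟨Finset.mem_univ _, hs⟩, rfl⟩
  have hK1 : γ'' ∈ Δ := hmemsupp γ hc'γ
  have hgetΔ : ∀ u ∈ Δ, ∃ s, c' s ≠ 0 ∧ (fun i => ((s i : ℤ))) = u := by
    intro u hu
    rw [hΔ_def] at hu
    unfold support at hu
    obtain ⟨s, hs, heq⟩ := Finset.mem_image.1 hu
    exact ⟨s, (Finset.mem_filter.1 hs).2, heq⟩
  have hK2 : ∀ u ∈ Δ, u ≠ γ'' → ∀ j, ¬(∀ i, i ≠ j → u i = γ'' i) := by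
    intro u hu hne j hagree
    obtain ⟨s, hs, heq⟩ := hgetΔ u hu
    have hsγ : ∀ i, i ≠ j → s i = γ i := by
      intro i hij
      have h1 : ((s i : ℤ)) = u i := congrFun heq i
      have h2 : ((s i : ℤ)) = ((γ i : ℤ)) := by rw [h1]; exact hagree i hij
      exact Subtype.coe_injective h2
    by_cases hsj : s j = γ j
    · apply hne
      rw [← heq]
      funext i
      show ((s i : ℤ)) = γ'' i
      by_cases hij : i = j
      · subst hij; rw [hsj]
      · rw [hsγ i hij]
    · apply hs
      have hsup : s = Function.update γ j (s j) := by
        funext i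
        by_cases hij : i = j
        · subst hij; rw [Function.update_self]
        · rw [Function.update_of_ne hij]; exact hsγ i hij
      rw [hsup]
      exact hline j (s j) hsj
  have hK3 : ∀ i, ∃ u ∈ Δ, u i ≠ γ'' i := by
    intro i
    by_contra hcon
    push_neg at hcon
    have hconst : ∀ s, c' s ≠ 0 → s i = γ i := by
      intro s hs
      have := hcon _ (hmemsupp s hs)
      exact Subtype.coe_injective this
    exact hnotslice (isSlice_of_constant c' i (γ i) hconst)
  obtain ⟨σ, hγmax, hvs⟩ := exists_good_orders Δ γ'' hK1 hK2 hK3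
  choose v hvmem hvne using hvs
  exact ⟨σ, HSet_ne_zero hk (maxElems σ Δ) γ'' hγmax v hvmem hvne⟩

end SlicePaper
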